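/- For two points z₁, z₂ in the upper half-plane ℍ, the Lipschitz constant of the label-preserving affine map between the corresponding normalized unit-area triangles equals (|z₂ - conj(z₁)| + |z₂ - z₁|) / (2 · Im(z₁)^{1/2} · Im(z₂)^{1/2}). -/

import Mathlib

open Complex

lemma aux (α β : ℂ) :
    IsLeast {K : ℝ | 0 ≤ K ∧ ∀ ζ η : ℂ,
      dist (α * ζ + β * (starRingEnd ℂ) ζ) (α * η + β * (starRingEnd ℂ) η) ≤ K * dist ζ η}
      (‖α‖ + ‖β‖) := by
  constructor
  · refine ⟨by positivity, fun ζ η => ?_⟩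
    rw [Complex.dist_eq, Complex.dist_eq]
    have h : α * ζ + β * (starRingEnd ℂ) ζ - (α * η + β * (starRingEnd ℂ) η)
        = α * (ζ - η) + β * (starRingEnd ℂ) (ζ - η) := by
      rw [map_sub]; ring
    rw [h]
    calc ‖α * (ζ - η) + β * (starRingEnd ℂ) (ζ - η)‖
        ≤ ‖α * (ζ - η)‖ + ‖β * (starRingEnd ℂ) (ζ - η)‖ :=
          norm_add_le _ _
      _ = (‖α‖ + ‖β‖) * ‖ζ - η‖ := by
          rw [norm_mul, norm_mul, Complex.norm_conj]; ring
  · rintro K ⟨hK0, hK⟩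
    by_cases hα : α = 0
    · have h := hK 1 0
      simpa [hα, Complex.dist_eq] using h
    · by_cases hβ : β = 0
      · have h := hK 1 0
        simpa [hβ, Complex.dist_eq] using h
      · obtain ⟨ζ, hζ⟩ := IsAlgClosed.exists_pow_nat_eq ((starRingEnd ℂ) α * β) zero_lt_two
        have hζ0 : ζ ≠ 0 := by
          intro h
          rw [h] at hζ
          simp only [ne_eq, zero_pow, OfNat.ofNat_ne_zero, not_false_iff] at hζ
          exact hβ (by
            have := hζ.symm
            rcases mul_eq_zero.mp this with h1 | h2
            · exact absurd (by simpa using h1) hα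
            · exact h2)
        have key : (starRingEnd ℂ) α * (α * ζ + β * (starRingEnd ℂ) ζ)
            = ζ * ((Complex.normSq α + Complex.normSq ζ : ℝ) : ℂ) := by
          have h1 : (starRingEnd ℂ) α * β = ζ ^ 2 := hζ.symm
          have h2 : ζ * (starRingEnd ℂ) ζ = (Complex.normSq ζ : ℂ) := Complex.mul_conj ζ
          have h3 : α * (starRingEnd ℂ) α = (Complex.normSq α : ℂ) := Complex.mul_conj α
          push_cast
          calc (starRingEnd ℂ) α * (α * ζ + β * (starRingEnd ℂ) ζ)
              = (α * (starRingEnd ℂ) α) * ζ + ((starRingEnd ℂ) α * β) * (starRingEnd ℂ) ζ := by ring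
            _ = (Complex.normSq α : ℂ) * ζ + ζ ^ 2 * (starRingEnd ℂ) ζ := by rw [h1, h3]
            _ = (Complex.normSq α : ℂ) * ζ + ζ * (ζ * (starRingEnd ℂ) ζ) := by ring
            _ = (Complex.normSq α : ℂ) * ζ + ζ * (Complex.normSq ζ : ℂ) := by rw [h2]
            _ = ζ * ((Complex.normSq α : ℂ) + (Complex.normSq ζ : ℂ)) := by ring
        have habs := congrArg (fun x : ℂ => ‖x‖) key
        rw [norm_mul, norm_mul, Complex.norm_conj, Complex.norm_real, Real.norm_eq_abs,
          _root_.abs_of_nonneg (add_nonneg (Complex.normSq_nonneg _) (Complex.normSq_nonneg _))] at habs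
        have hnsζ : Complex.normSq ζ = ‖α‖ * ‖β‖ := by
          rw [Complex.normSq_eq_norm_sq, ← norm_pow, hζ, norm_mul, Complex.norm_conj]
        have hnsα : Complex.normSq α = ‖α‖ ^ 2 := Complex.normSq_eq_norm_sq α
        have he : ‖α * ζ + β * (starRingEnd ℂ) ζ‖
            = (‖α‖ + ‖β‖) * ‖ζ‖ := by
          have hα0 : (0 : ℝ) < ‖α‖ := norm_pos_iff.mpr hα
          rw [hnsζ, hnsα] at habs
          have : ‖α‖ * ‖α * ζ + β * (starRingEnd ℂ) ζ‖
              = ‖α‖ * ((‖α‖ + ‖β‖) * ‖ζ‖) := by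
            rw [habs]; ring
          exact mul_left_cancel₀ (ne_of_gt hα0) this
        have h := hK ζ 0
        simp only [mul_zero, map_zero, add_zero, Complex.dist_eq, sub_zero] at h
        rw [he] at h
        have hζpos : (0 : ℝ) < ‖ζ‖ := norm_pos_iff.mpr hζ0
        exact le_of_mul_le_mul_right (by linarith) hζpos

theorem lipschitz_constant_affine_map (z₁ z₂ : ℂ) (h₁ : 0 < z₁.im) (h₂ : 0 < z₂.im) :
    IsLeast {K : ℝ | 0 ≤ K ∧ ∀ ζ η : ℂ,
      dist ((Real.sqrt (z₁.im / z₂.im) : ℂ) *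
          ((z₂ - (starRingEnd ℂ) z₁) / (z₁ - (starRingEnd ℂ) z₁) * ζ +
           (z₁ - z₂) / (z₁ - (starRingEnd ℂ) z₁) * (starRingEnd ℂ) ζ))
        ((Real.sqrt (z₁.im / z₂.im) : ℂ) *
          ((z₂ - (starRingEnd ℂ) z₁) / (z₁ - (starRingEnd ℂ) z₁) * η +
           (z₁ - z₂) / (z₁ - (starRingEnd ℂ) z₁) * (starRingEnd ℂ) η))
        ≤ K * dist ζ η}
      ((‖z₂ - (starRingEnd ℂ) z₁‖ + ‖z₂ - z₁‖) /
        (2 * Real.sqrt z₁.im * Real.sqrt z₂.im)) := by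
  set c : ℂ := (Real.sqrt (z₁.im / z₂.im) : ℂ) with hc
  set A : ℂ := (z₂ - (starRingEnd ℂ) z₁) / (z₁ - (starRingEnd ℂ) z₁) with hA
  set B : ℂ := (z₁ - z₂) / (z₁ - (starRingEnd ℂ) z₁) with hB
  have hfun : ∀ ζ : ℂ, c * (A * ζ + B * (starRingEnd ℂ) ζ)
      = (c * A) * ζ + (c * B) * (starRingEnd ℂ) ζ := fun ζ => by ring
  have key := aux (c * A) (c * B)
  have hval : ‖c * A‖ + ‖c * B‖
      = (‖z₂ - (starRingEnd ℂ) z₁‖ + ‖z₂ - z₁‖) /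
        (2 * Real.sqrt z₁.im * Real.sqrt z₂.im) := by
    have hden : z₁ - (starRingEnd ℂ) z₁ = (2 * z₁.im : ℝ) * I := Complex.sub_conj z₁
    have habs_den : ‖z₁ - (starRingEnd ℂ) z₁‖ = 2 * z₁.im := by
      rw [hden, norm_mul, Complex.norm_I, Complex.norm_real, Real.norm_eq_abs, mul_one,
        _root_.abs_of_nonneg (by positivity)]
    have hcabs : ‖c‖ = Real.sqrt z₁.im / Real.sqrt z₂.im := by
      rw [hc, Complex.norm_real, Real.norm_eq_abs, _root_.abs_of_nonneg (Real.sqrt_nonneg _),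
        Real.sqrt_div h₁.le]
    have hBnum : ‖z₁ - z₂‖ = ‖z₂ - z₁‖ := by
      rw [← neg_sub z₂ z₁, norm_neg]
    rw [norm_mul, norm_mul, hcabs, hA, hB, norm_div, norm_div, habs_den, hBnum]
    have hs1 : (0:ℝ) < Real.sqrt z₁.im := Real.sqrt_pos.mpr h₁
    have hs2 : (0:ℝ) < Real.sqrt z₂.im := Real.sqrt_pos.mpr h₂
    have hsq : Real.sqrt z₁.im ^ 2 = z₁.im := Real.sq_sqrt h₁.le
    rw [← hsq]
    field_simp
    rw [Real.sqrt_sq hs1.le]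
  rw [← hval]
  simpa only [hfun] using key
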